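/- For a finite field F_{p^m} and each fixed nonzero s in F_p, the ratio T_{1s}/p^m tends to 1/p^2 as m → ∞. -/

import Mathlib

open Finset Complex

namespace KlooAux

variable {F : Type*} [Field F] [Fintype F] [DecidableEq F]

/-- sum of nontrivial additive character vanishes, scaled version -/
lemma sum_mul_char (e : AddChar F ℂ) (he : e ≠ 1) (c : F) :
    ∑ a : F, e (a * c) = if c = 0 then (Fintype.card F : ℂ) else 0 := by
  split_ifs with h
  · simp [h, Finset.card_univ]
  · rw [← AddChar.sum_eq_zero_of_ne_one he]
    exact Fintype.sum_equiv (Equiv.mulRight₀ c h) _ _ (fun a => rfl)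

/-- the set of nonzero elements -/
noncomputable def Uc (F : Type*) [Field F] [Fintype F] [DecidableEq F] : Finset F :=
  ({0}ᶜ : Finset F)

lemma mem_Uc {x : F} : x ∈ Uc F ↔ x ≠ 0 := by simp [Uc]

lemma card_Uc : (Uc F).card = Fintype.card F - 1 := by
  simp [Uc, Finset.card_compl]

lemma sum_Uc (f : F → ℂ) : ∑ x ∈ Uc F, f x = (∑ x : F, f x) - f 0 := by
  rw [← Finset.sum_compl_add_sum ({0} : Finset F) f]
  simp [Uc]

/-- Kloosterman-type sum -/
noncomputable def S (e : AddChar F ℂ) (a b : F) : ℂ :=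
  ∑ x ∈ Uc F, e (a * x + b * x⁻¹)

lemma S_zero_zero (e : AddChar F ℂ) : S e 0 0 = (Fintype.card F : ℂ) - 1 := by
  simp only [S, zero_mul, add_zero, AddChar.map_zero_eq_one]
  rw [Finset.sum_const, card_Uc]
  have h1 : (1 : ℕ) ≤ Fintype.card F := Fintype.card_pos
  rw [nsmul_eq_mul, mul_one, Nat.cast_sub h1, Nat.cast_one]

lemma S_left (e : AddChar F ℂ) (he : e ≠ 1) {a : F} (ha : a ≠ 0) :
    S e a 0 = -1 := by
  simp only [S, zero_mul, add_zero]
  have : ∑ x ∈ Uc F, e (a * x) = ∑ x ∈ Uc F, e (x * a) := by simp [mul_comm]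
  rw [this, sum_Uc, sum_mul_char e he a, if_neg ha]
  simp

lemma S_right (e : AddChar F ℂ) (he : e ≠ 1) {b : F} (hb : b ≠ 0) :
    S e 0 b = -1 := by
  simp only [S, zero_mul, zero_add]
  have : ∑ x ∈ Uc F, e (b * x⁻¹) = ∑ x ∈ Uc F, e (b * x) := by
    refine Finset.sum_nbij' (fun x => x⁻¹) (fun x => x⁻¹) ?_ ?_ ?_ ?_ ?_ <;>
      simp [mem_Uc]
  rw [this]
  have : ∑ x ∈ Uc F, e (b * x) = ∑ x ∈ Uc F, e (x * b) := by
    simp [mul_comm]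
  rw [this, sum_Uc, sum_mul_char e he b, if_neg hb]
  simp

lemma S_eq_S_one (e : AddChar F ℂ) {a : F} (ha : a ≠ 0) (b : F) :
    S e a b = S e 1 (a * b) := by
  unfold S
  refine Finset.sum_nbij' (fun x => a * x) (fun y => a⁻¹ * y) ?_ ?_ ?_ ?_ ?_
  · intro x hx; rw [mem_Uc] at *; exact mul_ne_zero ha hx
  · intro y hy; rw [mem_Uc] at *; exact mul_ne_zero (inv_ne_zero ha) hy
  · intro x hx; field_simp
  · intro y hy; field_simp
  · intro x hx
    rw [mem_Uc] at hx
    congr 1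
    field_simp




lemma map_neg_char (e : AddChar F ℂ) (y : F) : e (-y) = (e y)⁻¹ := by
  apply eq_inv_of_mul_eq_one_left
  rw [← AddChar.map_add_eq_mul, neg_add_cancel, AddChar.map_zero_eq_one]

lemma conj_char (e : AddChar F ℂ) (habs : ∀ x, ‖e x‖ = 1) (y : F) :
    (starRingEnd ℂ) (e y) = e (-y) := by
  rw [map_neg_char, Complex.inv_def, Complex.normSq_eq_norm_sq, habs]
  simp

noncomputable def Scl (e : AddChar F ℂ) (a b : F) : ℂ :=
  ∑ x ∈ Uc F, e (-(a * x + b * x⁻¹))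

lemma conj_S (e : AddChar F ℂ) (habs : ∀ x, ‖e x‖ = 1) (a b : F) :
    (starRingEnd ℂ) (S e a b) = Scl e a b := by
  rw [S, Scl, map_sum]
  exact Finset.sum_congr rfl fun x _ => conj_char e habs _

/-- quadruple solutions set -/
noncomputable def sol (F : Type*) [Field F] [Fintype F] [DecidableEq F] :
    Finset (F × F × F × F) :=
  ((Uc F) ×ˢ (Uc F) ×ˢ (Uc F) ×ˢ (Uc F)).filter
    (fun v => v.1 + v.2.1 - v.2.2.1 - v.2.2.2 = 0 ∧
      v.1⁻¹ + v.2.1⁻¹ - v.2.2.1⁻¹ - v.2.2.2⁻¹ = 0)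

lemma foursum (f g h k : F → ℂ) :
    (∑ x ∈ Uc F, f x) * (∑ x ∈ Uc F, g x) * (∑ x ∈ Uc F, h x) * (∑ x ∈ Uc F, k x)
    = ∑ v ∈ (Uc F) ×ˢ (Uc F) ×ˢ (Uc F) ×ˢ (Uc F),
        f v.1 * g v.2.1 * h v.2.2.1 * k v.2.2.2 := by
  calc (∑ x ∈ Uc F, f x) * (∑ x ∈ Uc F, g x) * (∑ x ∈ Uc F, h x) * (∑ x ∈ Uc F, k x)
      = ((∑ x ∈ Uc F, f x) * (∑ x ∈ Uc F, g x)) * ((∑ x ∈ Uc F, h x) * (∑ x ∈ Uc F, k x)) := by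
        ring
    _ = (∑ x1 ∈ Uc F, ∑ x2 ∈ Uc F, f x1 * g x2) *
        (∑ x3 ∈ Uc F, ∑ x4 ∈ Uc F, h x3 * k x4) := by
        rw [Finset.sum_mul_sum, Finset.sum_mul_sum]
    _ = ∑ x1 ∈ Uc F, ∑ x3 ∈ Uc F,
          (∑ x2 ∈ Uc F, f x1 * g x2) * (∑ x4 ∈ Uc F, h x3 * k x4) :=
        Finset.sum_mul_sum _ _ _ _
    _ = ∑ x1 ∈ Uc F, ∑ x3 ∈ Uc F, ∑ x2 ∈ Uc F, ∑ x4 ∈ Uc F,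
          (f x1 * g x2) * (h x3 * k x4) := by
        exact Finset.sum_congr rfl fun x1 _ => Finset.sum_congr rfl fun x3 _ =>
          Finset.sum_mul_sum _ _ _ _
    _ = ∑ x1 ∈ Uc F, ∑ x2 ∈ Uc F, ∑ x3 ∈ Uc F, ∑ x4 ∈ Uc F,
          (f x1 * g x2) * (h x3 * k x4) := by
        exact Finset.sum_congr rfl fun x1 _ => Finset.sum_comm
    _ = ∑ v ∈ (Uc F) ×ˢ (Uc F) ×ˢ (Uc F) ×ˢ (Uc F),
          f v.1 * g v.2.1 * h v.2.2.1 * k v.2.2.2 := by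
        simp only [Finset.sum_product]
        exact Finset.sum_congr rfl fun x1 _ => Finset.sum_congr rfl fun x2 _ =>
          Finset.sum_congr rfl fun x3 _ => Finset.sum_congr rfl fun x4 _ => by ring

lemma normsq_expand (e : AddChar F ℂ) (habs : ∀ x, ‖e x‖ = 1) (a b : F) :
    ((Complex.normSq (S e a b) : ℂ)) ^ 2
    = ∑ v ∈ (Uc F) ×ˢ (Uc F) ×ˢ (Uc F) ×ˢ (Uc F),
        e (a * (v.1 + v.2.1 - v.2.2.1 - v.2.2.2)) *
        e (b * (v.1⁻¹ + v.2.1⁻¹ - v.2.2.1⁻¹ - v.2.2.2⁻¹)) := by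
  have h1 : ((Complex.normSq (S e a b) : ℂ)) ^ 2
      = S e a b * S e a b * ((starRingEnd ℂ) (S e a b) * (starRingEnd ℂ) (S e a b)) := by
    rw [← Complex.mul_conj]
    ring
  rw [h1, conj_S e habs, S, Scl, ← mul_assoc, foursum]
  refine Finset.sum_congr rfl fun v _ => ?_
  rw [← AddChar.map_add_eq_mul, ← AddChar.map_add_eq_mul, ← AddChar.map_add_eq_mul,
    ← AddChar.map_add_eq_mul]
  congr 1
  ring

lemma sum4_eq (e : AddChar F ℂ) (he : e ≠ 1) (habs : ∀ x, ‖e x‖ = 1) :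
    ∑ a : F, ∑ b : F, ((Complex.normSq (S e a b) : ℂ)) ^ 2
    = (Fintype.card F : ℂ) ^ 2 * ((sol F).card : ℂ) := by
  have step1 : ∀ a : F, ∑ b : F, ((Complex.normSq (S e a b) : ℂ)) ^ 2
      = ∑ v ∈ (Uc F) ×ˢ (Uc F) ×ˢ (Uc F) ×ˢ (Uc F),
          (e (a * (v.1 + v.2.1 - v.2.2.1 - v.2.2.2)) *
            ∑ b : F, e (b * (v.1⁻¹ + v.2.1⁻¹ - v.2.2.1⁻¹ - v.2.2.2⁻¹))) := by
    intro a
    simp only [normsq_expand e habs]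
    rw [Finset.sum_comm]
    exact Finset.sum_congr rfl fun v _ => by rw [Finset.mul_sum]
  calc ∑ a : F, ∑ b : F, ((Complex.normSq (S e a b) : ℂ)) ^ 2
      = ∑ v ∈ (Uc F) ×ˢ (Uc F) ×ˢ (Uc F) ×ˢ (Uc F),
          (∑ a : F, e (a * (v.1 + v.2.1 - v.2.2.1 - v.2.2.2))) *
          (∑ b : F, e (b * (v.1⁻¹ + v.2.1⁻¹ - v.2.2.1⁻¹ - v.2.2.2⁻¹))) := by
        simp only [step1]
        rw [Finset.sum_comm]
        exact Finset.sum_congr rfl fun v _ => by rw [← Finset.sum_mul]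
    _ = ∑ v ∈ (Uc F) ×ˢ (Uc F) ×ˢ (Uc F) ×ˢ (Uc F),
          (if v.1 + v.2.1 - v.2.2.1 - v.2.2.2 = 0 ∧
              v.1⁻¹ + v.2.1⁻¹ - v.2.2.1⁻¹ - v.2.2.2⁻¹ = 0
            then (Fintype.card F : ℂ) ^ 2 else 0) := by
        refine Finset.sum_congr rfl fun v _ => ?_
        rw [sum_mul_char e he, sum_mul_char e he]
        by_cases h1 : v.1 + v.2.1 - v.2.2.1 - v.2.2.2 = 0 <;>
          by_cases h2 : v.1⁻¹ + v.2.1⁻¹ - v.2.2.1⁻¹ - v.2.2.2⁻¹ = 0 <;>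
          simp [h1, h2] <;> ring
    _ = (Fintype.card F : ℂ) ^ 2 * ((sol F).card : ℂ) := by
        classical
        rw [sol, ← Finset.sum_filter, Finset.sum_const, nsmul_eq_mul, mul_comm]




lemma inv_add_inv' {u v : F} (hu : u ≠ 0) (hv : v ≠ 0) :
    u⁻¹ + v⁻¹ = (u + v) * (u * v)⁻¹ := by
  field_simp
  ring

lemma card_sol_le : (sol F).card ≤ 3 * (Fintype.card F) ^ 2 := by
  classical
  have hsub : sol F ⊆
      (Finset.univ.image (fun z : F × F => (z.1, -z.1, z.2, -z.2))) ∪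
      (Finset.univ.image (fun z : F × F => (z.1, z.2, z.1, z.2))) ∪
      (Finset.univ.image (fun z : F × F => (z.1, z.2, z.2, z.1))) := by
    intro v hv
    obtain ⟨x1, x2, x3, x4⟩ := v
    simp only [sol, Finset.mem_filter, Finset.mem_product, mem_Uc] at hv
    obtain ⟨⟨h1, h2, h3, h4⟩, hA, hB⟩ := hv
    simp only [Finset.mem_union, Finset.mem_image, Finset.mem_univ, true_and, Prod.mk.injEq]
    by_cases hτ : x1⁻¹ + x2⁻¹ = 0
    · left; left
      have hx2 : x2 = -x1 := by
        apply inv_injective; rw [inv_neg]; linear_combination hτ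
      have hτ' : x3⁻¹ + x4⁻¹ = 0 := by linear_combination hτ - hB
      have hx4 : x4 = -x3 := by
        apply inv_injective; rw [inv_neg]; linear_combination hτ'
      exact ⟨(x1, x3), rfl, hx2.symm, rfl, hx4.symm⟩
    · have hB' : x1⁻¹ + x2⁻¹ = x3⁻¹ + x4⁻¹ := by linear_combination hB
      have hA' : x1 + x2 = x3 + x4 := by linear_combination hA
      have hs0 : x1 + x2 ≠ 0 := by
        intro h0
        apply hτ
        rw [inv_add_inv' h1 h2, h0, zero_mul]
      have hπ : x1 * x2 = x3 * x4 := by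
        have e1 : (x1 + x2) * (x1 * x2)⁻¹ = (x3 + x4) * (x3 * x4)⁻¹ := by
          rw [← inv_add_inv' h1 h2, ← inv_add_inv' h3 h4]; exact hB'
        rw [← hA'] at e1
        have := mul_left_cancel₀ hs0 e1
        exact inv_injective this
      have key : (x1 - x3) * (x1 - x4) = 0 := by linear_combination (x1 : F) * hA' - hπ
      rcases mul_eq_zero.mp key with h | h
      · left; right
        exact ⟨(x1, x2), rfl, rfl, by linear_combination h, by linear_combination hA' - h⟩
      · right
        exact ⟨(x1, x2), rfl, rfl, by linear_combination hA' - h, by linear_combination h⟩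
  calc (sol F).card ≤ _ := Finset.card_le_card hsub
    _ ≤ 3 * (Fintype.card F) ^ 2 := by
      refine le_trans (Finset.card_union_le _ _) ?_
      have h1 := Finset.card_union_le
        (Finset.univ.image (fun z : F × F => (z.1, -z.1, z.2, -z.2)))
        (Finset.univ.image (fun z : F × F => (z.1, z.2, z.1, z.2)))
      have c1 := Finset.card_image_le (s := (Finset.univ : Finset (F × F)))
        (f := fun z : F × F => (z.1, -z.1, z.2, -z.2))
      have c2 := Finset.card_image_le (s := (Finset.univ : Finset (F × F)))
        (f := fun z : F × F => (z.1, z.2, z.1, z.2))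
      have c3 := Finset.card_image_le (s := (Finset.univ : Finset (F × F)))
        (f := fun z : F × F => (z.1, z.2, z.2, z.1))
      have hcard : (Finset.univ : Finset (F × F)).card = (Fintype.card F) ^ 2 := by
        simp [Finset.card_univ, Fintype.card_prod, sq]
      omega


lemma sum4_eq_real (e : AddChar F ℂ) (he : e ≠ 1) (habs : ∀ x, ‖e x‖ = 1) :
    ∑ a : F, ∑ b : F, (Complex.normSq (S e a b)) ^ 2
      = (Fintype.card F : ℝ) ^ 2 * ((sol F).card : ℝ) := by
  have h := sum4_eq e he habs
  exact_mod_cast h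

lemma S_bound (e : AddChar F ℂ) (he : e ≠ 1) (habs : ∀ x, ‖e x‖ = 1)
    {a b : F} (ha : a ≠ 0) (hb : b ≠ 0) (hq : 2 ≤ Fintype.card F) :
    ‖S e a b‖ ≤ 2 * (Fintype.card F : ℝ) ^ ((3:ℝ)/4) := by
  classical
  set q : ℕ := Fintype.card F with hqdef
  have hq0 : (0:ℝ) ≤ (q:ℝ) := by positivity
  have hnonneg : ∀ (a' b' : F), (0:ℝ) ≤ (Complex.normSq (S e a' b')) ^ 2 := by
    intro a' b'; positivity
  have hconst : ∀ a' ∈ Uc F, (Complex.normSq (S e a b)) ^ 2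
      = (Complex.normSq (S e a' (a'⁻¹ * (a * b)))) ^ 2 := by
    intro a' ha'
    rw [mem_Uc] at ha'
    rw [S_eq_S_one e ha', mul_inv_cancel_left₀ ha', S_eq_S_one e ha]
  have step1 : ((q - 1 : ℕ) : ℝ) * (Complex.normSq (S e a b)) ^ 2
      ≤ (q:ℝ) ^ 2 * (3 * (q:ℝ) ^ 2) := by
    have e1 : ((q - 1 : ℕ) : ℝ) * (Complex.normSq (S e a b)) ^ 2
        = ∑ a' ∈ Uc F, (Complex.normSq (S e a' (a'⁻¹ * (a * b)))) ^ 2 := by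
      rw [← card_Uc, ← hqdef] at *
      rw [Finset.sum_congr rfl fun a' ha' => (hconst a' ha').symm, Finset.sum_const,
        nsmul_eq_mul]
    rw [e1]
    have step2 : ∑ a' ∈ Uc F, (Complex.normSq (S e a' (a'⁻¹ * (a * b)))) ^ 2
        ≤ ∑ a' ∈ Uc F, ∑ b' : F, (Complex.normSq (S e a' b')) ^ 2 := by
      refine Finset.sum_le_sum fun a' _ => ?_
      exact Finset.single_le_sum (fun b' _ => hnonneg a' b') (Finset.mem_univ _)
    have step3 : ∑ a' ∈ Uc F, ∑ b' : F, (Complex.normSq (S e a' b')) ^ 2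
        ≤ ∑ a' : F, ∑ b' : F, (Complex.normSq (S e a' b')) ^ 2 := by
      refine Finset.sum_le_sum_of_subset_of_nonneg (Finset.subset_univ _) ?_
      intro a' _ _
      exact Finset.sum_nonneg fun b' _ => hnonneg a' b'
    have step4 : ∑ a' : F, ∑ b' : F, (Complex.normSq (S e a' b')) ^ 2
        ≤ (q:ℝ) ^ 2 * (3 * (q:ℝ) ^ 2) := by
      rw [sum4_eq_real e he habs]
      have hc : ((sol F).card : ℝ) ≤ 3 * (q:ℝ) ^ 2 := by
        have := card_sol_le (F := F)
        calc ((sol F).card : ℝ) ≤ ((3 * q ^ 2 : ℕ) : ℝ) := by exact_mod_cast this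
          _ = 3 * (q:ℝ) ^ 2 := by push_cast; ring
      have : (0:ℝ) ≤ (q:ℝ)^2 := by positivity
      nlinarith
    linarith
  have hq1 : ((q - 1 : ℕ) : ℝ) = (q:ℝ) - 1 := by
    have : 1 ≤ q := le_trans one_le_two hq
    push_cast [this]
    ring
  have hqR : (2:ℝ) ≤ (q:ℝ) := by exact_mod_cast hq
  have habs4 : (‖S e a b‖) ^ 4 = (Complex.normSq (S e a b)) ^ 2 := by
    rw [← Complex.sq_norm]; ring
  have hfinal4 : (‖S e a b‖) ^ 4 ≤ 16 * (q:ℝ) ^ 3 := by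
    rw [habs4]
    have hN := hnonneg a b
    nlinarith [step1, hq1, hqR]
  have hrpow : (2 * (q:ℝ) ^ ((3:ℝ)/4)) ^ 4 = 16 * (q:ℝ) ^ 3 := by
    rw [mul_pow]
    norm_num
    rw [← Real.rpow_natCast ((q:ℝ) ^ ((3:ℝ)/4)) 4, ← Real.rpow_mul hq0]
    norm_num
  have h4 : (‖S e a b‖) ^ 4 ≤ (2 * (q:ℝ) ^ ((3:ℝ)/4)) ^ 4 := by
    rw [hrpow]; exact hfinal4
  have h2 : (0:ℝ) ≤ 2 * (q:ℝ) ^ ((3:ℝ)/4) := by positivity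
  exact (pow_le_pow_iff_left₀ (norm_nonneg _) h2 (by norm_num)).mp h4

/-- the standard character of `ZMod p` -/
noncomputable def stdChar (p : ℕ) [NeZero p] : AddChar (ZMod p) ℂ :=
  AddChar.zmodChar p (Complex.isPrimitiveRoot_exp p (NeZero.ne p)).pow_eq_one

lemma stdChar_abs (p : ℕ) [NeZero p] (x : ZMod p) : ‖stdChar p x‖ = 1 := by
  rw [stdChar, AddChar.zmodChar_apply, norm_pow]
  have h : (2 * Real.pi * Complex.I / p) = ((2 * Real.pi / p : ℝ) : ℂ) * Complex.I := by
    push_cast; ring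
  rw [h, Complex.norm_exp_ofReal_mul_I, one_pow]

lemma stdChar_ne_one (p : ℕ) [hp : Fact p.Prime] : stdChar p ≠ 1 := by
  haveI : Fact (1 < p) := ⟨hp.out.one_lt⟩
  rw [AddChar.ne_one_iff]
  refine ⟨1, ?_⟩
  rw [stdChar, AddChar.zmodChar_apply, ZMod.val_one, pow_one]
  exact (Complex.isPrimitiveRoot_exp p (NeZero.ne p)).ne_one hp.out.one_lt

section Trace

variable (p : ℕ) [Fact p.Prime] (F : Type*) [Field F] [Fintype F] [DecidableEq F]
  [Algebra (ZMod p) F]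

/-- the canonical additive character of a finite field of characteristic p -/
noncomputable def trChar : AddChar F ℂ :=
  (stdChar p).compAddMonoidHom (Algebra.trace (ZMod p) F).toAddMonoidHom

lemma trChar_apply (x : F) : trChar p F x = stdChar p (Algebra.trace (ZMod p) F x) := rfl

lemma trChar_abs (x : F) : ‖trChar p F x‖ = 1 := stdChar_abs p _

lemma trChar_ne_one : trChar p F ≠ 1 := by
  obtain ⟨c, hc⟩ := AddChar.ne_one_iff.mp (stdChar_ne_one p)
  obtain ⟨x, hx⟩ := Algebra.trace_surjective (K := ZMod p) (L := F) c
  rw [AddChar.ne_one_iff]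
  exact ⟨x, by rwa [trChar_apply, hx]⟩

lemma trace_algebraMap_mul (a : ZMod p) (x : F) :
    Algebra.trace (ZMod p) F (algebraMap (ZMod p) F a * x)
      = a * Algebra.trace (ZMod p) F x := by
  rw [← Algebra.smul_def, map_smul, smul_eq_mul]

lemma count_identity (s : ZMod p) :
    ((p:ℂ))^2 * ((Finset.univ.filter (fun x : F => x ≠ 0 ∧
        Algebra.trace (ZMod p) F x = 1 ∧ Algebra.trace (ZMod p) F x⁻¹ = s)).card : ℂ)
      = ∑ a : ZMod p, ∑ b : ZMod p, (stdChar p) (-(a + b * s)) *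
          S (trChar p F) (algebraMap (ZMod p) F a) (algebraMap (ZMod p) F b) := by
  classical
  refine Eq.symm ?_
  have key : ∀ (a b : ZMod p),
      (stdChar p) (-(a + b * s)) *
          S (trChar p F) (algebraMap (ZMod p) F a) (algebraMap (ZMod p) F b)
      = ∑ x ∈ Uc F, (stdChar p) (a * (Algebra.trace (ZMod p) F x - 1)) *
          (stdChar p) (b * (Algebra.trace (ZMod p) F x⁻¹ - s)) := by
    intro a b
    rw [S, Finset.mul_sum]
    refine Finset.sum_congr rfl fun x hx => ?_
    rw [trChar_apply, map_add, trace_algebraMap_mul, trace_algebraMap_mul,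
      AddChar.map_add_eq_mul, ← AddChar.map_add_eq_mul, ← AddChar.map_add_eq_mul,
      ← AddChar.map_add_eq_mul]
    congr 1
    ring
  calc ∑ a : ZMod p, ∑ b : ZMod p, (stdChar p) (-(a + b * s)) *
          S (trChar p F) (algebraMap (ZMod p) F a) (algebraMap (ZMod p) F b)
      = ∑ a : ZMod p, ∑ b : ZMod p, ∑ x ∈ Uc F,
          (stdChar p) (a * (Algebra.trace (ZMod p) F x - 1)) *
          (stdChar p) (b * (Algebra.trace (ZMod p) F x⁻¹ - s)) := by
        simp only [key]
    _ = ∑ a : ZMod p, ∑ x ∈ Uc F, (stdChar p) (a * (Algebra.trace (ZMod p) F x - 1)) *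
          (∑ b : ZMod p, (stdChar p) (b * (Algebra.trace (ZMod p) F x⁻¹ - s))) := by
        refine Finset.sum_congr rfl fun a _ => ?_
        rw [Finset.sum_comm]
        exact Finset.sum_congr rfl fun x _ => by rw [← Finset.mul_sum]
    _ = ∑ x ∈ Uc F, (∑ a : ZMod p, (stdChar p) (a * (Algebra.trace (ZMod p) F x - 1))) *
          (∑ b : ZMod p, (stdChar p) (b * (Algebra.trace (ZMod p) F x⁻¹ - s))) := by
        rw [Finset.sum_comm]
        exact Finset.sum_congr rfl fun x _ => by rw [← Finset.sum_mul]
    _ = ∑ x ∈ Uc F, (if Algebra.trace (ZMod p) F x = 1 then (p:ℂ) else 0) *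
          (if Algebra.trace (ZMod p) F x⁻¹ = s then (p:ℂ) else 0) := by
        refine Finset.sum_congr rfl fun x _ => ?_
        rw [sum_mul_char _ (stdChar_ne_one p), sum_mul_char _ (stdChar_ne_one p)]
        simp only [ZMod.card, sub_eq_zero]
    _ = ((p:ℂ))^2 * ((Finset.univ.filter (fun x : F => x ≠ 0 ∧
          Algebra.trace (ZMod p) F x = 1 ∧ Algebra.trace (ZMod p) F x⁻¹ = s)).card : ℂ) := by
        have huniv : Finset.univ.filter (fun x : F => x ≠ 0 ∧
            Algebra.trace (ZMod p) F x = 1 ∧ Algebra.trace (ZMod p) F x⁻¹ = s)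
            = (Uc F).filter (fun x : F =>
              Algebra.trace (ZMod p) F x = 1 ∧ Algebra.trace (ZMod p) F x⁻¹ = s) := by
          ext x
          simp [mem_Uc, and_assoc]
        rw [huniv]
        rw [Finset.sum_congr rfl (fun x _ => by
          by_cases h1 : Algebra.trace (ZMod p) F x = 1 <;>
            by_cases h2 : Algebra.trace (ZMod p) F x⁻¹ = s <;>
            simp [h1, h2, pow_two] : ∀ x ∈ Uc F, _ = if (Algebra.trace (ZMod p) F x = 1 ∧
              Algebra.trace (ZMod p) F x⁻¹ = s) then ((p:ℂ))^2 else 0)]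
        rw [← Finset.sum_filter, Finset.sum_const, nsmul_eq_mul, mul_comm]

end Trace

section CountBound

variable (p : ℕ) [Fact p.Prime] (F : Type*) [Field F] [Fintype F] [DecidableEq F]
  [Algebra (ZMod p) F]

lemma count_bound (s : ZMod p) (hq : 2 ≤ Fintype.card F) :
    |((Finset.univ.filter (fun x : F => x ≠ 0 ∧
        Algebra.trace (ZMod p) F x = 1 ∧ Algebra.trace (ZMod p) F x⁻¹ = s)).card : ℝ) * (p:ℝ)^2
      - (Fintype.card F : ℝ)|
    ≤ 3 * (p:ℝ)^2 * (Fintype.card F : ℝ) ^ ((3:ℝ)/4) := by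
  classical
  haveI : NeZero p := ⟨(Fact.out : p.Prime).ne_zero⟩
  set q : ℕ := Fintype.card F with hqdef
  set T : ℕ := (Finset.univ.filter (fun x : F => x ≠ 0 ∧
        Algebra.trace (ZMod p) F x = 1 ∧ Algebra.trace (ZMod p) F x⁻¹ = s)).card with hTdef
  set ψ : AddChar (ZMod p) ℂ := stdChar p with hψdef
  set e : AddChar F ℂ := trChar p F with hedef
  have he1 : e ≠ 1 := trChar_ne_one p F
  set f : ZMod p → ZMod p → ℂ := fun a b => ψ (-(a + b * s)) *
      S e (algebraMap (ZMod p) F a) (algebraMap (ZMod p) F b) with hfdef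
  have hinj : Function.Injective (algebraMap (ZMod p) F) := (algebraMap (ZMod p) F).injective
  have hmapne : ∀ {c : ZMod p}, c ≠ 0 → algebraMap (ZMod p) F c ≠ 0 := by
    intro c hc
    simpa using (map_ne_zero_iff _ hinj).mpr hc
  have habsψ : ∀ x, ‖ψ x‖ = 1 := stdChar_abs p
  -- basic term bounds
  have hf00 : f 0 0 = (q : ℂ) - 1 := by
    simp only [hfdef, map_zero, S_zero_zero, zero_add, zero_mul, neg_zero,
      AddChar.map_zero_eq_one, one_mul]
    rfl
  have hab1 : ∀ b : ZMod p, b ≠ 0 → ‖f 0 b‖ = 1 := by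
    intro b hb
    rw [hfdef]
    simp only [map_zero, norm_mul]
    rw [S_right e he1 (hmapne hb), habsψ]
    simp
  have hfa0 : ∀ a : ZMod p, a ≠ 0 → ‖f a 0‖ = 1 := by
    intro a ha
    rw [hfdef]
    simp only [map_zero, norm_mul]
    rw [S_left e he1 (hmapne ha), habsψ]
    simp
  have hfab : ∀ a b : ZMod p, a ≠ 0 → b ≠ 0 →
      ‖f a b‖ ≤ 2 * (q:ℝ) ^ ((3:ℝ)/4) := by
    intro a b ha hb
    rw [hfdef]
    simp only [norm_mul]
    rw [habsψ, one_mul]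
    exact S_bound e he1 (fun x => trChar_abs p F x) (hmapne ha) (hmapne hb) hq
  -- decomposition
  have hdecomp : ((p:ℂ))^2 * (T:ℂ) - (q:ℂ)
      = (∑ a ∈ Uc (ZMod p), ∑ b : ZMod p, f a b) + (∑ b ∈ Uc (ZMod p), f 0 b) - 1 := by
    have h0 := count_identity p F s
    rw [← hTdef, ← hψdef, ← hedef] at h0
    have h1 : ∑ a : ZMod p, ∑ b : ZMod p, f a b
        = (∑ a ∈ Uc (ZMod p), ∑ b : ZMod p, f a b) + ∑ b : ZMod p, f 0 b := by
      rw [sum_Uc (fun a => ∑ b : ZMod p, f a b)]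
      ring
    have h2 : ∑ b : ZMod p, f 0 b = (∑ b ∈ Uc (ZMod p), f 0 b) + ((q:ℂ) - 1) := by
      rw [sum_Uc (fun b => f 0 b), hf00]
      ring
    rw [h0, h1, h2]
    ring
  -- cardinality of Uc (ZMod p)
  have hUcard : (Uc (ZMod p)).card = p - 1 := by
    rw [card_Uc, ZMod.card]
  have hp2 : 2 ≤ p := (Fact.out : p.Prime).two_le
  have hcast : ((p - 1 : ℕ) : ℝ) = (p:ℝ) - 1 := by
    have h1 : 1 ≤ p := le_trans one_le_two hp2
    push_cast [h1]
    ring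
  have hQ1 : (1:ℝ) ≤ (q:ℝ) ^ ((3:ℝ)/4) := by
    apply Real.one_le_rpow
    · exact_mod_cast le_trans one_le_two hq
    · norm_num
  -- bound each |g a|
  have hga : ∀ a ∈ Uc (ZMod p), ‖∑ b : ZMod p, f a b‖
      ≤ 1 + ((p:ℝ) - 1) * (2 * (q:ℝ) ^ ((3:ℝ)/4)) := by
    intro a ha
    rw [mem_Uc] at ha
    have h2 : ∑ b : ZMod p, f a b = (∑ b ∈ Uc (ZMod p), f a b) + f a 0 := by
      rw [sum_Uc (fun b => f a b)]; ring
    rw [h2]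
    refine le_trans (norm_add_le _ _) ?_
    rw [hfa0 a ha]
    have h3 : ‖∑ b ∈ Uc (ZMod p), f a b‖
        ≤ ((p:ℝ) - 1) * (2 * (q:ℝ) ^ ((3:ℝ)/4)) := by
      refine le_trans (norm_sum_le _ _) ?_
      refine le_trans (Finset.sum_le_card_nsmul _ _ (2 * (q:ℝ) ^ ((3:ℝ)/4))
        (fun b hb => hfab a b ha (mem_Uc.mp hb))) ?_
      rw [hUcard, nsmul_eq_mul, hcast]
    linarith
  -- total bound
  have hmain : ‖(p:ℂ)^2 * (T:ℂ) - (q:ℂ)‖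
      ≤ ((p:ℝ) - 1) * (1 + ((p:ℝ) - 1) * (2 * (q:ℝ) ^ ((3:ℝ)/4))) + ((p:ℝ) - 1) + 1 := by
    rw [hdecomp, sub_eq_add_neg]
    refine le_trans (norm_add_le _ _) ?_
    have hX : ‖∑ a ∈ Uc (ZMod p), ∑ b : ZMod p, f a b‖
        ≤ ((p:ℝ) - 1) * (1 + ((p:ℝ) - 1) * (2 * (q:ℝ) ^ ((3:ℝ)/4))) := by
      refine le_trans (norm_sum_le _ _) ?_
      refine le_trans (Finset.sum_le_card_nsmul _ _ _ (fun a ha => hga a ha)) ?_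
      rw [hUcard, nsmul_eq_mul, hcast]
    have hY : ‖∑ b ∈ Uc (ZMod p), f 0 b‖ ≤ ((p:ℝ) - 1) := by
      refine le_trans (norm_sum_le _ _) ?_
      refine le_trans (Finset.sum_le_card_nsmul _ _ 1
        (fun b hb => le_of_eq (hab1 b (mem_Uc.mp hb)))) ?_
      rw [hUcard, nsmul_eq_mul, hcast, mul_one]
    have hZ := norm_add_le (∑ a ∈ Uc (ZMod p), ∑ b : ZMod p, f a b)
      (∑ b ∈ Uc (ZMod p), f 0 b)
    have : ‖(-1 : ℂ)‖ = 1 := by simp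
    linarith
  -- transfer to the real statement
  have hrw : ((p:ℂ))^2 * (T:ℂ) - (q:ℂ) = (((T:ℝ) * (p:ℝ)^2 - (q:ℝ) : ℝ) : ℂ) := by
    push_cast; ring
  rw [hrw, Complex.norm_real, Real.norm_eq_abs] at hmain
  have hp2R : (2:ℝ) ≤ (p:ℝ) := by exact_mod_cast hp2
  nlinarith [hQ1, hp2R, sq_nonneg ((p:ℝ) - 1), mul_nonneg (sq_nonneg ((p:ℝ)-1)) (le_trans zero_le_one hQ1)]

end CountBound

lemma galois_bound (p : ℕ) [Fact p.Prime] (s : ZMod p) {m : ℕ} (hm : m ≠ 0) :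
    |(Nat.card {x : GaloisField p m | x ≠ 0 ∧
          Algebra.trace (ZMod p) (GaloisField p m) x = 1 ∧
          Algebra.trace (ZMod p) (GaloisField p m) x⁻¹ = s} : ℝ) / (p : ℝ) ^ m
        - 1 / (p : ℝ) ^ 2|
      ≤ 3 * ((p:ℝ) ^ m) ^ (-(1/4) : ℝ) := by
  classical
  letI : Fintype (GaloisField p m) := Fintype.ofFinite _
  have hp2 : 2 ≤ p := (Fact.out : p.Prime).two_le
  have hcard : Fintype.card (GaloisField p m) = p ^ m := by
    rw [← Nat.card_eq_fintype_card]
    exact GaloisField.card p m hm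
  have hq2 : 2 ≤ Fintype.card (GaloisField p m) := by
    rw [hcard]
    exact Nat.one_lt_pow hm (lt_of_lt_of_le one_lt_two hp2)
  have hT : Nat.card {x : GaloisField p m | x ≠ 0 ∧
        Algebra.trace (ZMod p) (GaloisField p m) x = 1 ∧
        Algebra.trace (ZMod p) (GaloisField p m) x⁻¹ = s}
      = (Finset.univ.filter (fun x : GaloisField p m => x ≠ 0 ∧
          Algebra.trace (ZMod p) (GaloisField p m) x = 1 ∧
          Algebra.trace (ZMod p) (GaloisField p m) x⁻¹ = s)).card := by
    rw [Nat.card_coe_set_eq, Set.ncard_eq_toFinset_card']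
    simp [Set.toFinset_setOf]
  have hb := count_bound p (GaloisField p m) s hq2
  rw [hcard] at hb
  rw [hT]
  set T : ℝ := ((Finset.univ.filter (fun x : GaloisField p m => x ≠ 0 ∧
      Algebra.trace (ZMod p) (GaloisField p m) x = 1 ∧
      Algebra.trace (ZMod p) (GaloisField p m) x⁻¹ = s)).card : ℝ) with hTdef
  set P : ℝ := (p : ℝ) with hPdef
  set Q : ℝ := (p : ℝ) ^ m with hQdef
  have hcast : ((p ^ m : ℕ) : ℝ) = Q := by push_cast [hQdef]; ring
  rw [hcast] at hb
  have hP0 : (0:ℝ) < P := by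
    rw [hPdef]; exact_mod_cast lt_of_lt_of_le two_pos hp2
  have hQ0 : (0:ℝ) < Q := by rw [hQdef]; positivity
  have heq : T / Q - 1 / P ^ 2 = (T * P ^ 2 - Q) / (P ^ 2 * Q) := by
    rw [div_sub_div _ _ hQ0.ne' (by positivity : (P:ℝ) ^ 2 ≠ 0)]
    rw [show Q * P ^ 2 = P ^ 2 * Q by ring]
    congr 1
    ring
  rw [heq, abs_div, abs_of_pos (by positivity : (0:ℝ) < P ^ 2 * Q)]
  have hstep : |T * P ^ 2 - Q| / (P ^ 2 * Q) ≤ (3 * P ^ 2 * Q ^ ((3:ℝ)/4)) / (P ^ 2 * Q) := by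
    gcongr
  have hfinal : (3 * P ^ 2 * Q ^ ((3:ℝ)/4)) / (P ^ 2 * Q) = 3 * Q ^ (-(1/4) : ℝ) := by
    rw [show (3 * P ^ 2 * Q ^ ((3:ℝ)/4)) / (P ^ 2 * Q) = 3 * (Q ^ ((3:ℝ)/4) / Q) by
      field_simp]
    congr 1
    rw [show Q ^ ((3:ℝ)/4) / Q = Q ^ ((3:ℝ)/4) / Q ^ (1:ℝ) by rw [Real.rpow_one]]
    rw [← Real.rpow_sub hQ0]
    norm_num
  exact hfinal ▸ hstep

end KlooAux

open Filter in
theorem trace_cotrace_ratio_tendsto (p : ℕ) [Fact p.Prime] (s : ZMod p) (hs : s ≠ 0) :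
    Tendsto (fun m : ℕ =>
      (Nat.card {x : GaloisField p m | x ≠ 0 ∧
          Algebra.trace (ZMod p) (GaloisField p m) x = 1 ∧
          Algebra.trace (ZMod p) (GaloisField p m) x⁻¹ = s} : ℝ) / (p : ℝ) ^ m)
      atTop (nhds (1 / (p : ℝ) ^ 2)) := by
  have hp2 : 2 ≤ p := (Fact.out : p.Prime).two_le
  have hpR : (1:ℝ) < (p:ℝ) := by exact_mod_cast lt_of_lt_of_le one_lt_two hp2
  rw [← tendsto_sub_nhds_zero_iff]
  have hg : Tendsto (fun m : ℕ => 3 * ((p:ℝ) ^ m) ^ (-(1/4) : ℝ)) atTop (nhds 0) := by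
    have h1 : Tendsto (fun m : ℕ => (p:ℝ) ^ m) atTop atTop :=
      tendsto_pow_atTop_atTop_of_one_lt hpR
    have h2 : Tendsto (fun x : ℝ => x ^ (-(1/4) : ℝ)) atTop (nhds 0) :=
      tendsto_rpow_neg_atTop (by norm_num)
    have h3 := (h2.comp h1).const_mul (3:ℝ)
    simpa using h3
  refine squeeze_zero_norm' ?_ hg
  filter_upwards [Filter.eventually_ge_atTop 1] with m hm
  exact KlooAux.galois_bound p s (by omega)
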